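/- arXiv:2510.12521 — 4 statements merged into one kernel-verified Lean document; each statement's English description precedes it below -/
import Mathlib

section
/- Let (Ω,𝓕,ℙ) be a probability space, let x† be a square-integrable random vector in ℝⁿ with mean μ and covariance Σ_x, and let ε be a square-integrable random vector in ℝᵐ with mean 0 and covariance Σ_ε, with x† and ε uncorrelated (𝔼[(x†−μ)εᵀ] = 0). Let A ∈ ℝ^{m×n} and assume AᵀA, Σ_x and Σ_ε are invertible. Then the choice M = AᵀΣ_εA(AᵀA)⁻¹Σ_x⁻¹ together with any x₀ ∈ μ + ker(M) minimizes, over all M ∈ ℝ^{n×n} such that AᵀA+M is invertible and all x₀ ∈ ℝⁿ, the risk 𝔼‖(AᵀA+M)⁻¹(Aᵀ(Ax†+ε) + Mx₀) − x†‖² of the Lavrentiev-regularized reconstruction. -/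
open MeasureTheory Matrix

lemma int_mul' {Ωs : Type*} [MeasurableSpace Ωs] {P : Measure Ωs} {f g : Ωs → ℝ}
    (hf : MemLp f 2 P) (hg : MemLp g 2 P) :
    Integrable (fun ω => f ω * g ω) P := by
  have h := hg.smul (φ := f) hf (p := (2 : ENNReal)) (q := (2 : ENNReal)) (r := (1 : ENNReal))
    (hpqr := ⟨by rw [ENNReal.inv_two_add_inv_two, inv_one]⟩)
  rw [memLp_one_iff_integrable] at h
  simpa [smul_eq_mul, Pi.mul_def] using h

lemma moment_sum' {Ωs : Type*} [MeasurableSpace Ωs] {P : Measure Ωs}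
    {ι : Type*} [Fintype ι] (fs : ι → Ωs → ℝ)
    (hfs : ∀ t, MemLp (fs t) 2 P) (S : ι → ι → ℝ)
    (hS : ∀ t s, ∫ ω, fs t ω * fs s ω ∂P = S t s) (c : ι → ℝ) :
    ∫ ω, (∑ t, c t * fs t ω) ^ 2 ∂P = ∑ t, ∑ s, c t * c s * S t s := by
  have h1 : ∀ ω, (∑ t, c t * fs t ω) ^ 2
      = ∑ t, ∑ s, c t * c s * (fs t ω * fs s ω) := by
    intro ω
    rw [sq, Finset.sum_mul_sum]
    exact Finset.sum_congr rfl fun t _ => Finset.sum_congr rfl fun s _ => by ring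
  simp_rw [h1]
  rw [integral_finset_sum _ (fun t _ =>
    integrable_finset_sum _ fun s _ => (int_mul' (hfs t) (hfs s)).const_mul _)]
  refine Finset.sum_congr rfl fun t _ => ?_
  rw [integral_finset_sum _ (fun s _ => (int_mul' (hfs t) (hfs s)).const_mul _)]
  exact Finset.sum_congr rfl fun s _ => by rw [integral_const_mul, hS]

lemma trace_quad {a b : ℕ} (G : Matrix (Fin a) (Fin b) ℝ) (S : Matrix (Fin b) (Fin b) ℝ) :
    ∑ i, ∑ j, ∑ k, G i j * G i k * S j k = trace (G * S * Gᵀ) := by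
  simp only [trace, diag, mul_apply, transpose_apply, Finset.sum_mul]
  refine Finset.sum_congr rfl fun i _ => ?_
  rw [Finset.sum_comm]
  exact Finset.sum_congr rfl fun k _ => Finset.sum_congr rfl fun j _ => by ring

lemma risk_eq {Ωs : Type*} [MeasurableSpace Ωs]
    (P : Measure Ωs) [IsProbabilityMeasure P] {n m : ℕ}
    (x : Ωs → Fin n → ℝ) (ε : Ωs → Fin m → ℝ)
    (hx : MemLp x 2 P) (hε : MemLp ε 2 P)
    (μx : Fin n → ℝ) (hμx : ∫ ω, x ω ∂P = μx)
    (Sx : Matrix (Fin n) (Fin n) ℝ)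
    (hSx : ∀ i j, ∫ ω, (x ω i - μx i) * (x ω j - μx j) ∂P = Sx i j)
    (hεmean : ∫ ω, ε ω ∂P = 0)
    (Se : Matrix (Fin m) (Fin m) ℝ)
    (hSe : ∀ i j, ∫ ω, ε ω i * ε ω j ∂P = Se i j)
    (huncorr : ∀ i j, ∫ ω, (x ω i - μx i) * ε ω j ∂P = 0)
    (A : Matrix (Fin m) (Fin n) ℝ)
    (M : Matrix (Fin n) (Fin n) ℝ) (v : Fin n → ℝ) (hMu : IsUnit (Aᵀ * A + M)) :
    ∫ ω, ∑ i, (((Aᵀ * A + M)⁻¹).mulVec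
        (Aᵀ.mulVec (A.mulVec (x ω) + ε ω) + M.mulVec v) - x ω) i ^ 2 ∂P
    = trace (((Aᵀ*A+M)⁻¹*(Aᵀ*A) - 1) * Sx * ((Aᵀ*A+M)⁻¹*(Aᵀ*A) - 1)ᵀ)
      + trace (((Aᵀ*A+M)⁻¹*Aᵀ) * Se * ((Aᵀ*A+M)⁻¹*Aᵀ)ᵀ)
      + ∑ i, ((((Aᵀ*A+M)⁻¹*M).mulVec (v - μx)) i)^2 := by
  classical
  set W := (Aᵀ*A+M)⁻¹ with hW
  set G := W * (Aᵀ*A) - 1 with hG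
  set H := W * Aᵀ with hH
  set d := (W*M).mulVec (v - μx) with hd
  -- component Memℒp
  have hz2 : ∀ j, MemLp (fun ω => x ω j - μx j) 2 P := fun j => by
    have h1 : MemLp (fun ω => x ω j) 2 P :=
      (ContinuousLinearMap.proj (R := ℝ) (φ := fun _ : Fin n => ℝ) j).comp_memLp' hx
    exact h1.sub (memLp_const _)
  have hε2 : ∀ k, MemLp (fun ω => ε ω k) 2 P := fun k =>
    (ContinuousLinearMap.proj (R := ℝ) (φ := fun _ : Fin m => ℝ) k).comp_memLp' hε
  -- zero means
  have hxint : Integrable x P := hx.integrable one_le_two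
  have hεint : Integrable ε P := hε.integrable one_le_two
  have hz0 : ∀ j, ∫ ω, (x ω j - μx j) ∂P = 0 := by
    intro j
    have h1 := (ContinuousLinearMap.proj (R := ℝ) (φ := fun _ : Fin n => ℝ) j).integral_comp_comm hxint
    rw [hμx] at h1
    have h2 : Integrable (fun ω => x ω j) P :=
      (ContinuousLinearMap.proj (R := ℝ) (φ := fun _ : Fin n => ℝ) j).integrable_comp hxint
    rw [integral_sub h2 (integrable_const _)]
    simp only [ContinuousLinearMap.proj_apply, Function.comp] at h1
    rw [h1]
    simp
  have hε0 : ∀ k, ∫ ω, ε ω k ∂P = 0 := by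
    intro k
    have h1 := (ContinuousLinearMap.proj (R := ℝ) (φ := fun _ : Fin m => ℝ) k).integral_comp_comm hεint
    rw [hεmean] at h1
    simpa [ContinuousLinearMap.proj_apply, Function.comp] using h1
  -- the family
  set fs : (Fin n ⊕ (Fin m ⊕ Unit)) → Ωs → ℝ :=
    Sum.elim (fun j ω => x ω j - μx j) (Sum.elim (fun k ω => ε ω k) (fun _ _ => 1)) with hfs_def
  have hfs : ∀ t, MemLp (fs t) 2 P := by
    rintro (j | k | u)
    · exact hz2 j
    · exact hε2 k
    · exact memLp_const _
  set S : (Fin n ⊕ (Fin m ⊕ Unit)) → (Fin n ⊕ (Fin m ⊕ Unit)) → ℝ :=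
    Sum.elim (fun j => Sum.elim (fun j' => Sx j j') (Sum.elim (fun _ => 0) (fun _ => 0)))
      (Sum.elim
        (fun k => Sum.elim (fun _ => 0) (Sum.elim (fun k' => Se k k') (fun _ => 0)))
        (fun _ => Sum.elim (fun _ => 0) (Sum.elim (fun _ => 0) (fun _ => 1)))) with hS_def
  have hS : ∀ t s, ∫ ω, fs t ω * fs s ω ∂P = S t s := by
    rintro (j | k | u) (j' | k' | u')
    · exact hSx j j'
    · exact huncorr j k'
    · simpa [fs, S] using hz0 j
    · simp only [fs, S, Sum.elim_inl, Sum.elim_inr]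
      rw [← huncorr j' k]
      exact integral_congr_ae (Filter.Eventually.of_forall fun ω => by ring)
    · exact hSe k k'
    · simpa [fs, S] using hε0 k
    · simpa [fs, S] using hz0 j'
    · simpa [fs, S] using hε0 k'
    · simp [fs, S]
  -- coefficients
  set c : Fin n → (Fin n ⊕ (Fin m ⊕ Unit)) → ℝ :=
    fun i => Sum.elim (fun j => G i j) (Sum.elim (fun k => H i k) (fun _ => d i)) with hc_def
  -- pointwise identity
  have hWinv : W * (Aᵀ*A + M) = 1 :=
    nonsing_inv_mul _ ((isUnit_iff_isUnit_det _).mp hMu)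
  have hμ : (W*(Aᵀ*A)).mulVec μx + (W*M).mulVec μx = μx := by
    rw [← add_mulVec, ← Matrix.mul_add, hWinv, one_mulVec]
  have hpt : ∀ ω, (W.mulVec (Aᵀ.mulVec (A.mulVec (x ω) + ε ω) + M.mulVec v) - x ω)
      = fun i => ∑ t, c i t * fs t ω := by
    intro ω
    have lhs_eq : W.mulVec (Aᵀ.mulVec (A.mulVec (x ω) + ε ω) + M.mulVec v) - x ω
        = (W*(Aᵀ*A)).mulVec (x ω) + (W*Aᵀ).mulVec (ε ω) + (W*M).mulVec v - x ω := by
      simp only [mulVec_add, mulVec_mulVec, Matrix.mul_assoc]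
    have rhs_eq : (fun i => ∑ t, c i t * fs t ω)
        = G.mulVec (x ω - μx) + H.mulVec (ε ω) + d := by
      funext i'
      simp only [hc_def, hfs_def, Fintype.sum_sum_type, Sum.elim_inl, Sum.elim_inr,
        Finset.univ_unique, Finset.sum_singleton, Pi.add_apply, mulVec, dotProduct,
        Pi.sub_apply, mul_one]
      rw [add_assoc]
    rw [lhs_eq, rhs_eq, hG, hH, hd]
    funext i
    have h := congrFun hμ i
    simp only [Pi.add_apply, Pi.sub_apply, sub_mulVec, one_mulVec, mulVec_sub] at h ⊢
    linarith
  -- rewrite the integrand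
  have hint_eq : (fun ω => ∑ i, (W.mulVec (Aᵀ.mulVec (A.mulVec (x ω) + ε ω) + M.mulVec v) - x ω) i ^ 2)
      = fun ω => ∑ i, (∑ t, c i t * fs t ω) ^ 2 := by
    funext ω
    rw [hpt ω]
  rw [hint_eq]
  -- exchange sum and integral
  have hg2 : ∀ i, MemLp (fun ω => ∑ t, c i t * fs t ω) 2 P := fun i => by
    have h := memLp_finset_sum (μ := P) (f := fun t ω => c i t * fs t ω)
      Finset.univ (fun t _ => (hfs t).const_mul (c i t))
    simpa using h
  rw [integral_finset_sum _ (fun i _ => by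
    have := int_mul' (hg2 i) (hg2 i)
    simpa [← sq] using this)]
  have hmom := fun i => moment_sum' fs hfs S hS (c i)
  simp_rw [hmom]
  have hsum : ∀ i : Fin n, (∑ t, ∑ s, c i t * c i s * S t s)
      = (∑ j, ∑ k, G i j * G i k * Sx j k) + (∑ j, ∑ k, H i j * H i k * Se j k)
        + d i ^ 2 := by
    intro i
    simp only [hc_def, hS_def, Fintype.sum_sum_type, Finset.univ_unique,
      Finset.sum_singleton, Sum.elim_inl, Sum.elim_inr, mul_zero, mul_one,
      Finset.sum_const_zero, add_zero, zero_add]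
    ring
  rw [Finset.sum_congr rfl fun i _ => hsum i]
  rw [Finset.sum_add_distrib, Finset.sum_add_distrib, trace_quad, trace_quad]

lemma psd_diag_nonneg {a : ℕ} {U : Matrix (Fin a) (Fin a) ℝ} (hU : U.PosSemidef) (i : Fin a) :
    0 ≤ U i i := by
  have h := hU.dotProduct_mulVec_nonneg (Pi.single i 1)
  simpa [Matrix.mulVec_single, dotProduct, Pi.single_apply] using h

lemma trace_nonneg' {a : ℕ} {U : Matrix (Fin a) (Fin a) ℝ} (hU : U.PosSemidef) :
    0 ≤ trace U :=
  Finset.sum_nonneg fun i _ => psd_diag_nonneg hU i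

lemma posDef_of_psd_isUnit {a : ℕ} {S : Matrix (Fin a) (Fin a) ℝ}
    (hS : S.PosSemidef) (hSu : IsUnit S) : S.PosDef := by
  refine .of_dotProduct_mulVec_pos hS.1 (fun v hv => ?_)
  rcases lt_or_eq_of_le (hS.dotProduct_mulVec_nonneg v) with h | h
  · exact h
  · exfalso
    have h0 : S *ᵥ v = 0 := (hS.dotProduct_mulVec_zero_iff v).mp h.symm
    have hinj : Function.Injective S.mulVec := mulVec_injective_iff_isUnit.mpr hSu
    exact hv (hinj (by simpa using h0))

lemma posDef_conj {a b : ℕ} {S : Matrix (Fin a) (Fin a) ℝ} (hS : S.PosDef)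
    (A : Matrix (Fin a) (Fin b) ℝ) (hA : Function.Injective A.mulVec) :
    (Aᵀ * S * A).PosDef := by
  refine Matrix.PosDef.of_dotProduct_mulVec_pos ?_ ?_
  · have h : (Aᵀ * S * A)ᴴ = Aᵀ * Sᴴ * A := by
      simp [conjTranspose_mul, Matrix.mul_assoc]
    rw [Matrix.IsHermitian, h, hS.1.eq]
  · intro v hv
    have hAv : A *ᵥ v ≠ 0 := by
      intro h; exact hv (hA (by simpa using h))
    have := hS.dotProduct_mulVec_pos hAv
    have hrw : star v ⬝ᵥ (Aᵀ * S * A) *ᵥ v = star (A *ᵥ v) ⬝ᵥ S *ᵥ (A *ᵥ v) := by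
      rw [← mulVec_mulVec, ← mulVec_mulVec, star_trivial, star_trivial,
        dotProduct_mulVec, ← mulVec_transpose, transpose_transpose]
    rw [hrw]; exact this

lemma conj_psd {a : ℕ} {T : Matrix (Fin a) (Fin a) ℝ} (hT : T.PosSemidef)
    (U : Matrix (Fin a) (Fin a) ℝ) : (U * T * Uᵀ).PosSemidef := by
  have := hT.mul_mul_conjTranspose_same U
  simpa [conjTranspose_eq_transpose_of_trivial] using this

lemma key_ineq {n : ℕ} (B Sx C : Matrix (Fin n) (Fin n) ℝ)
    (hB : Bᵀ = B) (hSx : Sxᵀ = Sx) (hC : Cᵀ = C)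
    (hTps : (C + B * Sx * B).PosSemidef)
    (Wo W : Matrix (Fin n) (Fin n) ℝ)
    (hWo : Wo * (C + B * Sx * B) = Sx * B) :
    trace ((Wo * B - 1) * Sx * (Wo * B - 1)ᵀ) + trace (Wo * C * Woᵀ)
      ≤ trace ((W * B - 1) * Sx * (W * B - 1)ᵀ) + trace (W * C * Wᵀ) := by
  set T := C + B * Sx * B with hTdef
  have hTsymm : Tᵀ = T := by
    rw [hTdef, transpose_add, transpose_mul, transpose_mul, hB, hSx, hC,
      ← Matrix.mul_assoc]
  have hTWo : T * Woᵀ = B * Sx := by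
    have h := congrArg transpose hWo
    rw [transpose_mul, hTsymm, transpose_mul, hB, hSx] at h
    exact h
  -- expansion of the objective
  have expand : ∀ V : Matrix (Fin n) (Fin n) ℝ,
      trace ((V * B - 1) * Sx * (V * B - 1)ᵀ) + trace (V * C * Vᵀ)
        = trace (V * T * Vᵀ) - 2 * trace (V * (B * Sx)) + trace Sx := by
    intro V
    have h1 : (V * B - 1) * Sx * (V * B - 1)ᵀ
        = V * (B * Sx * B) * Vᵀ - V * (B * Sx) - Sx * B * Vᵀ + Sx := by
      rw [transpose_sub, transpose_mul, hB, transpose_one]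
      noncomm_ring
    have h2 : V * T * Vᵀ = V * C * Vᵀ + V * (B * Sx * B) * Vᵀ := by
      rw [hTdef]; noncomm_ring
    have h3 : trace (Sx * B * Vᵀ) = trace (V * (B * Sx)) := by
      rw [← trace_transpose (Sx * B * Vᵀ), transpose_mul, transpose_mul,
        transpose_transpose, hB, hSx]
    rw [h1, h2, trace_add, trace_sub, trace_sub, trace_add, h3]
    ring
  have hQps : ((W - Wo) * T * (W - Wo)ᵀ).PosSemidef := conj_psd hTps _
  have hQ : trace ((W - Wo) * T * (W - Wo)ᵀ)
      = trace (W * T * Wᵀ) - 2 * trace (W * (B * Sx)) + trace (Wo * (B * Sx)) := by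
    have e1 : (W - Wo) * T * (W - Wo)ᵀ
        = W * T * Wᵀ - W * (T * Woᵀ) - Wo * T * Wᵀ + Wo * (T * Woᵀ) := by
      rw [transpose_sub]; noncomm_ring
    have e2 : trace (Wo * T * Wᵀ) = trace (W * (B * Sx)) := by
      rw [hWo, ← trace_transpose (Sx * B * Wᵀ), transpose_mul, transpose_mul,
        transpose_transpose, hB, hSx]
    rw [e1, trace_add, trace_sub, trace_sub, e2, hTWo]
    ring
  have hWoT : trace (Wo * T * Woᵀ) = trace (Wo * (B * Sx)) := by
    rw [Matrix.mul_assoc, hTWo]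
  have h0 : 0 ≤ trace ((W - Wo) * T * (W - Wo)ᵀ) := by
    refine Finset.sum_nonneg fun i _ => ?_
    have := hQps.dotProduct_mulVec_nonneg (Pi.single i 1)
    simpa [Matrix.mulVec_single, dotProduct, Pi.single_apply] using this
  rw [expand W, expand Wo, hWoT]
  have hq := hQ
  linarith [hQ ▸ h0]

/-- **Optimal Lavrentiev regularization.** With `x†` square-integrable (mean `μx`,
covariance `Sx`), `ε` square-integrable (mean `0`, covariance `Se`), uncorrelated,
and `AᵀA`, `Sx`, `Se` invertible, the choice `M = Aᵀ Se A (AᵀA)⁻¹ Sx⁻¹` together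
with any `x₀ ∈ μx + ker M` minimizes the risk
`𝔼‖(AᵀA+M)⁻¹(Aᵀ(Ax†+ε) + M x₀) − x†‖²` over all `M` with `AᵀA+M` invertible
and all `x₀`. -/
theorem optimal_lavrentiev {Ωs : Type*} [MeasurableSpace Ωs]
    (P : Measure Ωs) [IsProbabilityMeasure P] {n m : ℕ}
    (x : Ωs → Fin n → ℝ) (ε : Ωs → Fin m → ℝ)
    (hx : MemLp x 2 P) (hε : MemLp ε 2 P)
    (μx : Fin n → ℝ) (hμx : ∫ ω, x ω ∂P = μx)
    (Sx : Matrix (Fin n) (Fin n) ℝ)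
    (hSx : ∀ i j, ∫ ω, (x ω i - μx i) * (x ω j - μx j) ∂P = Sx i j)
    (hεmean : ∫ ω, ε ω ∂P = 0)
    (Se : Matrix (Fin m) (Fin m) ℝ)
    (hSe : ∀ i j, ∫ ω, ε ω i * ε ω j ∂P = Se i j)
    (huncorr : ∀ i j, ∫ ω, (x ω i - μx i) * ε ω j ∂P = 0)
    (A : Matrix (Fin m) (Fin n) ℝ)
    (hATA : IsUnit (Aᵀ * A)) (hSxinv : IsUnit Sx) (hSeinv : IsUnit Se) :
    ∀ x₀ : Fin n → ℝ,
      (Aᵀ * Se * A * (Aᵀ * A)⁻¹ * Sx⁻¹).mulVec (x₀ - μx) = 0 →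
      ∀ (M : Matrix (Fin n) (Fin n) ℝ) (x₀' : Fin n → ℝ), IsUnit (Aᵀ * A + M) →
        ∫ ω, ∑ i, (((Aᵀ * A + Aᵀ * Se * A * (Aᵀ * A)⁻¹ * Sx⁻¹)⁻¹).mulVec
            (Aᵀ.mulVec (A.mulVec (x ω) + ε ω) +
              (Aᵀ * Se * A * (Aᵀ * A)⁻¹ * Sx⁻¹).mulVec x₀) - x ω) i ^ 2 ∂P ≤
        ∫ ω, ∑ i, (((Aᵀ * A + M)⁻¹).mulVec
            (Aᵀ.mulVec (A.mulVec (x ω) + ε ω) + M.mulVec x₀') - x ω) i ^ 2 ∂P := by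
  intro x₀ hx₀ M x₀' hMu
  classical
  -- abbreviations
  set B := Aᵀ * A with hBdef
  set C := Aᵀ * Se * A with hCdef
  set Mo := C * B⁻¹ * Sx⁻¹ with hModef
  -- determinant units
  have hdATA : IsUnit B.det := (isUnit_iff_isUnit_det _).mp hATA
  have hdSx : IsUnit Sx.det := (isUnit_iff_isUnit_det _).mp hSxinv
  -- symmetry
  have hBsymm : Bᵀ = B := by rw [hBdef, transpose_mul, transpose_transpose]
  have hSxsymm : Sxᵀ = Sx := by
    ext i j
    rw [transpose_apply, ← hSx j i, ← hSx i j]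
    exact integral_congr_ae (Filter.Eventually.of_forall fun ω => by ring)
  have hSesymm : Seᵀ = Se := by
    ext i j
    rw [transpose_apply, ← hSe j i, ← hSe i j]
    exact integral_congr_ae (Filter.Eventually.of_forall fun ω => by ring)
  -- component Memℒp
  have hz2 : ∀ j, MemLp (fun ω => x ω j - μx j) 2 P := fun j => by
    have h1 : MemLp (fun ω => x ω j) 2 P :=
      (ContinuousLinearMap.proj (R := ℝ) (φ := fun _ : Fin n => ℝ) j).comp_memLp' hx
    exact h1.sub (memLp_const _)
  have hε2 : ∀ k, MemLp (fun ω => ε ω k) 2 P := fun k =>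
    (ContinuousLinearMap.proj (R := ℝ) (φ := fun _ : Fin m => ℝ) k).comp_memLp' hε
  -- positive semidefiniteness of Sx, Se
  have quad_expand : ∀ {a : ℕ} (Q : Matrix (Fin a) (Fin a) ℝ) (v : Fin a → ℝ),
      v ⬝ᵥ Q *ᵥ v = ∑ t, ∑ s, v t * v s * Q t s := by
    intro a Q v
    simp only [dotProduct, mulVec, Finset.mul_sum]
    exact Finset.sum_congr rfl fun t _ => Finset.sum_congr rfl fun s _ => by ring
  have hSxps : Sx.PosSemidef := by
    refine .of_dotProduct_mulVec_nonneg ?_ (fun v => ?_)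
    · show Sxᴴ = Sx
      rw [conjTranspose_eq_transpose_of_trivial, hSxsymm]
    · have hmom := moment_sum' (P := P) (fun j ω => x ω j - μx j) hz2
        (fun j k => Sx j k) hSx v
      rw [show star v = v from star_trivial v, quad_expand Sx v, ← hmom]
      exact integral_nonneg fun ω => sq_nonneg _
  have hSeps : Se.PosSemidef := by
    refine .of_dotProduct_mulVec_nonneg ?_ (fun v => ?_)
    · show Seᴴ = Se
      rw [conjTranspose_eq_transpose_of_trivial, hSesymm]
    · have hmom := moment_sum' (P := P) (fun k ω => ε ω k) hε2
        (fun j k => Se j k) hSe v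
      rw [show star v = v from star_trivial v, quad_expand Se v, ← hmom]
      exact integral_nonneg fun ω => sq_nonneg _
  have hSxpd : Sx.PosDef := posDef_of_psd_isUnit hSxps hSxinv
  -- C is PSD and symmetric
  have hCps : C.PosSemidef := by
    have h := hSeps.conjTranspose_mul_mul_same A
    rw [conjTranspose_eq_transpose_of_trivial] at h
    exact h
  have hCsymm : Cᵀ = C := by
    rw [← conjTranspose_eq_transpose_of_trivial]
    exact hCps.1
  -- B * Sx * B is PD
  have hinjB : Function.Injective B.mulVec := mulVec_injective_iff_isUnit.mpr hATA
  have hBSxBpd : (B * Sx * B).PosDef := by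
    have h := posDef_conj hSxpd B hinjB
    rwa [hBsymm] at h
  have hTpd : (C + B * Sx * B).PosDef := Matrix.PosDef.posSemidef_add hCps hBSxBpd
  -- key algebraic identity
  have hMoSxB : Mo * (Sx * B) = C := by
    rw [hModef, Matrix.mul_assoc (C * B⁻¹) Sx⁻¹ (Sx * B), ← Matrix.mul_assoc Sx⁻¹ Sx B,
      nonsing_inv_mul _ hdSx, Matrix.one_mul, Matrix.mul_assoc C B⁻¹ B,
      nonsing_inv_mul _ hdATA, Matrix.mul_one]
  have hNT : (B + Mo) * (Sx * B) = C + B * Sx * B := by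
    rw [Matrix.add_mul, hMoSxB, ← Matrix.mul_assoc, add_comm]
  -- B + Mo is a unit
  have hdet : (B + Mo).det * (Sx * B).det = (C + B * Sx * B).det := by
    rw [← det_mul, hNT]
  have hdetN : (B + Mo).det ≠ 0 := fun h =>
    hTpd.det_pos.ne' (by rw [← hdet, h, zero_mul])
  have hMou : IsUnit (B + Mo) :=
    (isUnit_iff_isUnit_det _).mpr (isUnit_iff_ne_zero.mpr hdetN)
  have hdN : IsUnit (B + Mo).det := (isUnit_iff_isUnit_det _).mp hMou
  have hWoT : (B + Mo)⁻¹ * (C + B * Sx * B) = Sx * B := by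
    rw [← hNT, ← Matrix.mul_assoc, nonsing_inv_mul _ hdN, Matrix.one_mul]
  -- rewrite both risks
  rw [risk_eq P x ε hx hε μx hμx Sx hSx hεmean Se hSe huncorr A Mo x₀ hMou,
    risk_eq P x ε hx hε μx hμx Sx hSx hεmean Se hSe huncorr A M x₀' hMu]
  -- the offset term on the left vanishes
  have hzero : ((B + Mo)⁻¹ * Mo).mulVec (x₀ - μx) = 0 := by
    rw [← mulVec_mulVec, hx₀, mulVec_zero]
  rw [hzero]
  simp only [Pi.zero_apply, ne_eq, OfNat.ofNat_ne_zero, not_false_eq_true, zero_pow,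
    Finset.sum_const_zero, add_zero]
  -- convert the noise terms
  have hHC : ∀ V : Matrix (Fin n) (Fin n) ℝ, (V * Aᵀ) * Se * (V * Aᵀ)ᵀ = V * C * Vᵀ := by
    intro V
    rw [transpose_mul, transpose_transpose, hCdef]
    simp only [Matrix.mul_assoc]
  rw [hHC ((B + Mo)⁻¹), hHC ((B + M)⁻¹)]
  -- final inequality
  have hk := key_ineq B Sx C hBsymm hSxsymm hCsymm hTpd.posSemidef
    ((B + Mo)⁻¹) ((B + M)⁻¹) hWoT
  have hd2 : 0 ≤ ∑ i, (((B + M)⁻¹ * M).mulVec (x₀' - μx)) i ^ 2 :=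
    Finset.sum_nonneg fun i _ => sq_nonneg _
  linarith
end

section
/- Let A ∈ ℝ^{m×n} with AᵀA invertible and let Σ_x ∈ ℝ^{n×n} and Σ_ε ∈ ℝ^{m×m} be symmetric positive definite. Then the matrix AᵀA + AᵀΣ_εA(AᵀA)⁻¹Σ_x⁻¹ is invertible. -/
open Matrix

/-- If `AᵀA` is invertible and `Sx`, `Se` are symmetric positive definite, then
the system matrix `AᵀA + Aᵀ Se A (AᵀA)⁻¹ Sx⁻¹` of the optimal
Lavrentiev-regularized reconstruction is invertible. -/
theorem optimal_lavrentiev_system_matrix_invertible {m n : ℕ}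
    (A : Matrix (Fin m) (Fin n) ℝ) (hATA : IsUnit (Aᵀ * A))
    (Sx : Matrix (Fin n) (Fin n) ℝ) (hSx : Sx.PosDef)
    (Se : Matrix (Fin m) (Fin m) ℝ) (hSe : Se.PosDef) :
    IsUnit (Aᵀ * A + Aᵀ * Se * A * (Aᵀ * A)⁻¹ * Sx⁻¹) := by
  have hdet : IsUnit (Aᵀ * A).det := (Matrix.isUnit_iff_isUnit_det _).mp hATA
  set C : Matrix (Fin m) (Fin n) ℝ := A * (Aᵀ * A)⁻¹ with hC
  have hCt : Cᵀ = (Aᵀ * A)⁻¹ * Aᵀ := by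
    rw [hC, transpose_mul, transpose_nonsing_inv, transpose_mul, transpose_transpose]
  have hmid : (Sx + Cᵀ * Se * C).PosDef := by
    have : (Cᵀ * Se * C).PosSemidef := by
      have := hSe.posSemidef.conjTranspose_mul_mul_same C
      simpa using this
    exact hSx.add_posSemidef this
  have hfact : Aᵀ * A + Aᵀ * Se * A * (Aᵀ * A)⁻¹ * Sx⁻¹
      = (Aᵀ * A) * (Sx + Cᵀ * Se * C) * Sx⁻¹ := by
    have h1 : (Aᵀ * A) * (Aᵀ * A)⁻¹ = 1 := mul_nonsing_inv _ hdet
    have h2 : Sx * Sx⁻¹ = 1 := mul_nonsing_inv _ hSx.det_pos.ne'.isUnit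
    rw [hCt, hC, mul_add, add_mul, mul_assoc (Aᵀ * A) Sx Sx⁻¹, h2, mul_one]
    congr 1
    rw [show Aᵀ * A * ((Aᵀ * A)⁻¹ * Aᵀ * Se * (A * (Aᵀ * A)⁻¹))
        = (Aᵀ * A * (Aᵀ * A)⁻¹) * (Aᵀ * Se * A * (Aᵀ * A)⁻¹) from by simp only [Matrix.mul_assoc],
      h1, one_mul]
  rw [hfact]
  exact (hATA.mul ((Matrix.isUnit_iff_isUnit_det _).mpr hmid.det_pos.ne'.isUnit)).mul
    ((Matrix.isUnit_iff_isUnit_det _).mpr (by simpa [Matrix.det_nonsing_inv] using hSx.det_pos.ne'.isUnit.inv))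
end

section
/- Let (Ω,𝓕,ℙ) be a probability space, let x† be a square-integrable random vector in ℝⁿ with mean μ and covariance Σ_x, and let ε be a square-integrable random vector in ℝᵐ with mean 0 and covariance Σ_ε, with x† and ε uncorrelated (𝔼[(x†−μ)εᵀ] = 0). Let A ∈ ℝ^{m×n} and assume B := Aᵀ(AΣ_xAᵀ + Σ_ε)A is invertible. Let N be the unique symmetric solution of the Lyapunov equation AᵀAΣ_x + Σ_xAᵀA = NB + BN, and assume N is invertible. Then M = N⁻¹ − AᵀA together with any x₀ ∈ μ + ker(M) minimizes, over all symmetric M ∈ ℝ^{n×n} such that AᵀA+M is invertible and all x₀ ∈ ℝⁿ, the risk 𝔼‖(AᵀA+M)⁻¹(Aᵀ(Ax†+ε) + Mx₀) − x†‖² of the quadratically regularized reconstruction. -/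
set_option maxHeartbeats 1000000

open MeasureTheory Matrix

section OptimalQuadHelpers

variable {Ωs : Type*} [MeasurableSpace Ωs] {P : Measure Ωs} [IsProbabilityMeasure P]

private lemma mul_int {f g : Ωs → ℝ} (hf : MemLp f 2 P) (hg : MemLp g 2 P) :
    Integrable (fun ω => f ω * g ω) P := by
  have h : MemLp (f • g) 1 P := hg.smul hf
  exact h.integrable le_rfl

private lemma memlp_comp {k : ℕ} {f : Ωs → Fin k → ℝ} (hf : MemLp f 2 P) (j : Fin k) :
    MemLp (fun ω => f ω j) 2 P :=
  (ContinuousLinearMap.proj (R := ℝ) (φ := fun _ : Fin k => ℝ) j).comp_memLp' hf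

private lemma integral_eval {k : ℕ} {f : Ωs → Fin k → ℝ} (hf : MemLp f 2 P) (j : Fin k) :
    ∫ ω, f ω j ∂P = (∫ ω, f ω ∂P) j := by
  have := (ContinuousLinearMap.proj (R := ℝ) (φ := fun _ : Fin k => ℝ) j).integral_comp_comm
    (hf.integrable one_le_two)
  simpa using this

private lemma integral_bilin {k l : ℕ} {f : Ωs → Fin k → ℝ} {g : Ωs → Fin l → ℝ}
    (hf : ∀ j, MemLp (fun ω => f ω j) 2 P) (hg : ∀ j, MemLp (fun ω => g ω j) 2 P)
    (C : Matrix (Fin k) (Fin l) ℝ) (hC : ∀ i j, ∫ ω, f ω i * g ω j ∂P = C i j)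
    (v : Fin k → ℝ) (w : Fin l → ℝ) :
    ∫ ω, (∑ j, v j * f ω j) * (∑ j, w j * g ω j) ∂P = v ⬝ᵥ C.mulVec w := by
  calc ∫ ω, (∑ j, v j * f ω j) * (∑ j, w j * g ω j) ∂P
      = ∫ ω, ∑ j, ∑ j', (v j * w j') * (f ω j * g ω j') ∂P := by
        congr 1; funext ω
        rw [Finset.sum_mul_sum]
        exact Finset.sum_congr rfl fun _ _ => Finset.sum_congr rfl fun _ _ => by ring
    _ = ∑ j, ∑ j', (v j * w j') * ∫ ω, f ω j * g ω j' ∂P := by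
        rw [integral_finset_sum]
        · refine Finset.sum_congr rfl fun j _ => ?_
          rw [integral_finset_sum]
          · exact Finset.sum_congr rfl fun j' _ => integral_const_mul _ _
          · exact fun j' _ => (mul_int (hf j) (hg j')).const_mul _
        · exact fun j _ => integrable_finset_sum _
            fun j' _ => (mul_int (hf j) (hg j')).const_mul _
    _ = v ⬝ᵥ C.mulVec w := by
        simp_rw [hC, dotProduct, Matrix.mulVec, dotProduct, Finset.mul_sum]
        exact Finset.sum_congr rfl fun j _ => Finset.sum_congr rfl fun j' _ => by ring

private lemma integral_lin {k : ℕ} {f : Ωs → Fin k → ℝ}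
    (hf : ∀ j, MemLp (fun ω => f ω j) 2 P) (h0 : ∀ j, ∫ ω, f ω j ∂P = 0)
    (v : Fin k → ℝ) : ∫ ω, (∑ j, v j * f ω j) ∂P = 0 := by
  rw [integral_finset_sum _ fun j _ => ((hf j).integrable one_le_two).const_mul _]
  simp [integral_const_mul, h0]

private lemma memlp_sumlin {k : ℕ} {f : Ωs → Fin k → ℝ}
    (hf : ∀ j, MemLp (fun ω => f ω j) 2 P) (v : Fin k → ℝ) :
    MemLp (fun ω => ∑ j, v j * f ω j) 2 P :=
  memLp_finset_sum _ fun j _ => (hf j).const_mul _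

private lemma diag_dot {n k : ℕ} (C : Matrix (Fin k) (Fin k) ℝ) (D : Matrix (Fin n) (Fin k) ℝ)
    (i : Fin n) : (D i) ⬝ᵥ C.mulVec (D i) = (D * C * Dᵀ) i i := by
  simp only [dotProduct, Matrix.mulVec, Matrix.mul_apply, Matrix.transpose_apply, dotProduct,
    Finset.mul_sum, Finset.sum_mul]
  rw [Finset.sum_comm]
  exact Finset.sum_congr rfl fun a _ => Finset.sum_congr rfl fun b _ => by ring

private lemma risk_formula {n m : ℕ}
    (u : Ωs → Fin n → ℝ) (e : Ωs → Fin m → ℝ)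
    (hu : ∀ j, MemLp (fun ω => u ω j) 2 P)
    (he : ∀ j, MemLp (fun ω => e ω j) 2 P)
    (hu0 : ∀ j, ∫ ω, u ω j ∂P = 0) (he0 : ∀ j, ∫ ω, e ω j ∂P = 0)
    (Sx : Matrix (Fin n) (Fin n) ℝ) (hSx : ∀ i j, ∫ ω, u ω i * u ω j ∂P = Sx i j)
    (Se : Matrix (Fin m) (Fin m) ℝ) (hSe : ∀ i j, ∫ ω, e ω i * e ω j ∂P = Se i j)
    (hcross : ∀ i j, ∫ ω, u ω i * e ω j ∂P = 0)
    (D : Matrix (Fin n) (Fin n) ℝ) (E : Matrix (Fin n) (Fin m) ℝ) (c : Fin n → ℝ) :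
    ∫ ω, ∑ i, (D.mulVec (u ω) i + E.mulVec (e ω) i + c i) ^ 2 ∂P
      = (D * Sx * Dᵀ).trace + (E * Se * Eᵀ).trace + ∑ i, c i ^ 2 := by
  have hp : ∀ i : Fin n, MemLp (fun ω => D.mulVec (u ω) i) 2 P := fun i =>
    memlp_sumlin hu (D i)
  have hq : ∀ i : Fin n, MemLp (fun ω => E.mulVec (e ω) i) 2 P := fun i =>
    memlp_sumlin he (E i)
  have hg : ∀ i : Fin n, MemLp (fun ω => D.mulVec (u ω) i + E.mulVec (e ω) i + c i) 2 P :=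
    fun i => ((hp i).add (hq i)).add (memLp_const _)
  have hi : ∀ i : Fin n, ∫ ω, (D.mulVec (u ω) i + E.mulVec (e ω) i + c i) ^ 2 ∂P
      = (D * Sx * Dᵀ) i i + (E * Se * Eᵀ) i i + c i ^ 2 := by
    intro i
    have hpq : ∫ ω, (∑ j, D i j * u ω j) * (∑ j, E i j * e ω j) ∂P = 0 := by
      have := integral_bilin hu he (0 : Matrix (Fin n) (Fin m) ℝ)
        (fun a b => by simpa using hcross a b) (D i) (E i)
      simpa using this
    have hpp : ∫ ω, (∑ j, D i j * u ω j) * (∑ j, D i j * u ω j) ∂P = (D * Sx * Dᵀ) i i := by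
      rw [integral_bilin hu hu Sx hSx (D i) (D i)]; exact diag_dot _ _ _
    have hqq : ∫ ω, (∑ j, E i j * e ω j) * (∑ j, E i j * e ω j) ∂P = (E * Se * Eᵀ) i i := by
      rw [integral_bilin he he Se hSe (E i) (E i)]; exact diag_dot _ _ _
    have hp0 : ∫ ω, (∑ j, D i j * u ω j) ∂P = 0 := integral_lin hu hu0 (D i)
    have hq0 : ∫ ω, (∑ j, E i j * e ω j) ∂P = 0 := integral_lin he he0 (E i)
    have hpl : MemLp (fun ω => ∑ j, D i j * u ω j) 2 P := memlp_sumlin hu (D i)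
    have hql : MemLp (fun ω => ∑ j, E i j * e ω j) 2 P := memlp_sumlin he (E i)
    have ipp : Integrable (fun ω => (∑ j, D i j * u ω j) * (∑ j, D i j * u ω j)) P :=
      mul_int hpl hpl
    have iqq : Integrable (fun ω => (∑ j, E i j * e ω j) * (∑ j, E i j * e ω j)) P :=
      mul_int hql hql
    have ipq : Integrable (fun ω => (∑ j, D i j * u ω j) * (∑ j, E i j * e ω j)) P :=
      mul_int hpl hql
    have ip : Integrable (fun ω => ∑ j, D i j * u ω j) P := hpl.integrable one_le_two
    have iq : Integrable (fun ω => ∑ j, E i j * e ω j) P := hql.integrable one_le_two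
    have key : ∫ ω, ((∑ j, D i j * u ω j) + (∑ j, E i j * e ω j) + c i) ^ 2 ∂P
        = (D * Sx * Dᵀ) i i + (E * Se * Eᵀ) i i + c i ^ 2 := by
      calc ∫ ω, ((∑ j, D i j * u ω j) + (∑ j, E i j * e ω j) + c i) ^ 2 ∂P
          = ∫ ω, ((∑ j, D i j * u ω j) * (∑ j, D i j * u ω j)
              + ((∑ j, E i j * e ω j) * (∑ j, E i j * e ω j)
              + (2 * ((∑ j, D i j * u ω j) * (∑ j, E i j * e ω j))
              + ((2 * c i) * (∑ j, D i j * u ω j)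
              + ((2 * c i) * (∑ j, E i j * e ω j) + c i ^ 2))))) ∂P := by
            congr 1; funext ω; ring
        _ = (D * Sx * Dᵀ) i i + (E * Se * Eᵀ) i i + c i ^ 2 := by
            have I5 : Integrable (fun ω => (2 * c i) * (∑ j, E i j * e ω j) + c i ^ 2) P :=
              (iq.const_mul (2 * c i)).add (integrable_const (c i ^ 2))
            have I4 : Integrable (fun ω => (2 * c i) * (∑ j, D i j * u ω j)
                + ((2 * c i) * (∑ j, E i j * e ω j) + c i ^ 2)) P :=
              (ip.const_mul (2 * c i)).add I5
            have I3 : Integrable (fun ω => 2 * ((∑ j, D i j * u ω j) * (∑ j, E i j * e ω j))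
                + ((2 * c i) * (∑ j, D i j * u ω j)
                + ((2 * c i) * (∑ j, E i j * e ω j) + c i ^ 2))) P :=
              (ipq.const_mul 2).add I4
            have I2 : Integrable (fun ω => (∑ j, E i j * e ω j) * (∑ j, E i j * e ω j)
                + (2 * ((∑ j, D i j * u ω j) * (∑ j, E i j * e ω j))
                + ((2 * c i) * (∑ j, D i j * u ω j)
                + ((2 * c i) * (∑ j, E i j * e ω j) + c i ^ 2)))) P := iqq.add I3
            rw [integral_add ipp I2, integral_add iqq I3, integral_add (ipq.const_mul 2) I4,
              integral_add (ip.const_mul (2 * c i)) I5,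
              integral_add (iq.const_mul (2 * c i)) (integrable_const (c i ^ 2))]
            rw [hpp, hqq, integral_const_mul, integral_const_mul, integral_const_mul,
              hpq, hp0, hq0]
            simp only [mul_zero, add_zero, zero_add, integral_const, measure_univ,
              ENNReal.toReal_one, smul_eq_mul, one_mul, probReal_univ]
            ring
    simpa [Matrix.mulVec, dotProduct] using key
  rw [integral_finset_sum _ fun i _ => by
    simpa [pow_two] using mul_int (hg i) (hg i)]
  simp_rw [hi]
  simp [Matrix.trace, Matrix.diag, Finset.sum_add_distrib]

end OptimalQuadHelpers

section MatrixHelpers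

variable {n m : ℕ}

private lemma cyc (X Y Z : Matrix (Fin n) (Fin n) ℝ) : (X*Y*Z).trace = (Z*X*Y).trace := by
  rw [Matrix.trace_mul_comm (X*Y) Z, Matrix.mul_assoc]

private lemma step1 (A : Matrix (Fin m) (Fin n) ℝ) (Sx : Matrix (Fin n) (Fin n) ℝ)
    (Se : Matrix (Fin m) (Fin m) ℝ) (hSxT : Sxᵀ = Sx)
    (X : Matrix (Fin n) (Fin n) ℝ) (hX : Xᵀ = X) :
    ((X*(Aᵀ*A) - 1) * Sx * (X*(Aᵀ*A) - 1)ᵀ).trace + ((X*Aᵀ) * Se * (X*Aᵀ)ᵀ).trace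
    = (X*(Aᵀ*(A*Sx*Aᵀ+Se)*A)*X).trace - 2 * (X*(Aᵀ*A*Sx)).trace + Sx.trace := by
  set T := Aᵀ*A with hTdef
  have hT : Tᵀ = T := by simp [hTdef, Matrix.transpose_mul]
  have h1 : (X*T - 1)ᵀ = T*X - 1 := by
    simp [Matrix.transpose_sub, Matrix.transpose_mul, hX, hT]
  have h2 : (X*Aᵀ)ᵀ = A*X := by simp [Matrix.transpose_mul, hX]
  rw [h1, h2]
  have h3 : (X*T - 1) * Sx * (T*X - 1) = X*(T*Sx*T)*X - X*(T*Sx) - Sx*(T*X) + Sx := by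
    simp only [Matrix.sub_mul, Matrix.mul_sub, Matrix.mul_one, Matrix.one_mul, Matrix.mul_assoc]
    abel
  have h4 : X*Aᵀ*Se*(A*X) = X*(Aᵀ*Se*A)*X := by simp only [Matrix.mul_assoc]
  have h5 : X*(T*Sx*T)*X + X*(Aᵀ*Se*A)*X = X*(Aᵀ*(A*Sx*Aᵀ+Se)*A)*X := by
    rw [hTdef]
    simp only [Matrix.add_mul, Matrix.mul_add, Matrix.mul_assoc]
  have h6 : (Sx*(T*X)).trace = (X*(T*Sx)).trace := by
    rw [← Matrix.trace_transpose (Sx*(T*X))]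
    simp only [Matrix.transpose_mul, hSxT, hT, hX, Matrix.mul_assoc]
  have h7 : (X*(Aᵀ*A*Sx)) = X*(T*Sx) := by rw [hTdef]
  rw [h3, h7, h4]
  simp only [Matrix.trace_add, Matrix.trace_sub]
  rw [h6]
  have := congrArg Matrix.trace h5
  simp only [Matrix.trace_add] at this
  linarith

private lemma swap_tr (T S X : Matrix (Fin n) (Fin n) ℝ) (hT : Tᵀ = T) (hS : Sᵀ = S)
    (hX : Xᵀ = X) : (X*(S*T)).trace = (X*(T*S)).trace := by
  rw [← Matrix.trace_transpose (X*(S*T))]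
  simp only [Matrix.transpose_mul, hS, hT, hX]
  rw [Matrix.trace_mul_comm]

private lemma step2 (B G G' R N : Matrix (Fin n) (Fin n) ℝ)
    (htrR : (R*G').trace = (R*G).trace) (htrN : (N*G').trace = (N*G).trace)
    (hLy : G + G' = N*B + B*N) :
    ((R*B*R).trace - 2*(R*G).trace) - ((N*B*N).trace - 2*(N*G).trace)
      = ((R-N)*B*(R-N)).trace := by
  have expand : (R-N)*B*(R-N) = R*B*R - R*B*N - N*B*R + N*B*N := by
    simp only [Matrix.sub_mul, Matrix.mul_sub, Matrix.mul_assoc]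
    abel
  have e1 : (R*(N*B)).trace = (N*B*R).trace := by
    rw [← Matrix.mul_assoc]; exact (cyc N B R).symm
  have e2 : (R*(B*N)).trace = (R*B*N).trace := by rw [Matrix.mul_assoc]
  have e3 : (N*(N*B)).trace = (N*B*N).trace := by
    rw [← Matrix.mul_assoc]; exact (cyc N B N).symm
  have e4 : (N*(B*N)).trace = (N*B*N).trace := by rw [Matrix.mul_assoc]
  have hR2 : 2*(R*G).trace = (N*B*R).trace + (R*B*N).trace := by
    have := congrArg (fun Z => (R*Z).trace) hLy
    simp only [Matrix.mul_add, Matrix.trace_add] at this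
    rw [e1, e2, htrR] at this
    linarith
  have hN2 : 2*(N*G).trace = (N*B*N).trace + (N*B*N).trace := by
    have := congrArg (fun Z => (N*Z).trace) hLy
    simp only [Matrix.mul_add, Matrix.trace_add] at this
    rw [e3, e4, htrN] at this
    linarith
  rw [expand]
  simp only [Matrix.trace_add, Matrix.trace_sub]
  linarith

end MatrixHelpers

/-- **Optimal quadratic regularization.** With `x†` square-integrable (mean `μx`,
covariance `Sx`), `ε` square-integrable (mean `0`, covariance `Se`), uncorrelated,
`B := Aᵀ(A Sx Aᵀ + Se)A` invertible, and `N` the symmetric solution of the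
Lyapunov equation `AᵀA Sx + Sx AᵀA = NB + BN` with `N` invertible, the choice
`M = N⁻¹ − AᵀA` together with any `x₀ ∈ μx + ker M` minimizes the risk
`𝔼‖(AᵀA+M)⁻¹(Aᵀ(Ax†+ε) + M x₀) − x†‖²` over all symmetric `M` with `AᵀA+M`
invertible and all `x₀`. -/
theorem optimal_quadratic {Ωs : Type*} [MeasurableSpace Ωs]
    (P : Measure Ωs) [IsProbabilityMeasure P] {n m : ℕ}
    (x : Ωs → Fin n → ℝ) (ε : Ωs → Fin m → ℝ)
    (hx : MemLp x 2 P) (hε : MemLp ε 2 P)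
    (μx : Fin n → ℝ) (hμx : ∫ ω, x ω ∂P = μx)
    (Sx : Matrix (Fin n) (Fin n) ℝ)
    (hSx : ∀ i j, ∫ ω, (x ω i - μx i) * (x ω j - μx j) ∂P = Sx i j)
    (hεmean : ∫ ω, ε ω ∂P = 0)
    (Se : Matrix (Fin m) (Fin m) ℝ)
    (hSe : ∀ i j, ∫ ω, ε ω i * ε ω j ∂P = Se i j)
    (huncorr : ∀ i j, ∫ ω, (x ω i - μx i) * ε ω j ∂P = 0)
    (A : Matrix (Fin m) (Fin n) ℝ)
    (hB : IsUnit (Aᵀ * (A * Sx * Aᵀ + Se) * A))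
    (N : Matrix (Fin n) (Fin n) ℝ) (hNsymm : Nᵀ = N)
    (hLyap : Aᵀ * A * Sx + Sx * (Aᵀ * A) =
      N * (Aᵀ * (A * Sx * Aᵀ + Se) * A) + Aᵀ * (A * Sx * Aᵀ + Se) * A * N)
    (hN : IsUnit N) :
    ∀ x₀ : Fin n → ℝ,
      (N⁻¹ - Aᵀ * A).mulVec (x₀ - μx) = 0 →
      ∀ (M : Matrix (Fin n) (Fin n) ℝ) (x₀' : Fin n → ℝ),
        Mᵀ = M → IsUnit (Aᵀ * A + M) →
        ∫ ω, ∑ i, (((Aᵀ * A + (N⁻¹ - Aᵀ * A))⁻¹).mulVec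
            (Aᵀ.mulVec (A.mulVec (x ω) + ε ω) +
              (N⁻¹ - Aᵀ * A).mulVec x₀) - x ω) i ^ 2 ∂P ≤
        ∫ ω, ∑ i, (((Aᵀ * A + M)⁻¹).mulVec
            (Aᵀ.mulVec (A.mulVec (x ω) + ε ω) + M.mulVec x₀') - x ω) i ^ 2 ∂P := by
  intro x₀ hker M x₀' hMsymm hMinv
  have hdetN : IsUnit N.det := (Matrix.isUnit_iff_isUnit_det N).mp hN
  have hdetM : IsUnit (Aᵀ * A + M).det := (Matrix.isUnit_iff_isUnit_det _).mp hMinv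
  have hxj : ∀ j, MemLp (fun ω => x ω j) 2 P := fun j => memlp_comp hx j
  have hej : ∀ j, MemLp (fun ω => ε ω j) 2 P := fun j => memlp_comp hε j
  have hu : ∀ j, MemLp (fun ω => x ω j - μx j) 2 P := fun j => (hxj j).sub (memLp_const _)
  have hu0 : ∀ j, ∫ ω, (x ω j - μx j) ∂P = 0 := by
    intro j
    rw [integral_sub ((hxj j).integrable one_le_two) (integrable_const _)]
    rw [integral_eval hx j, hμx]
    simp
  have he0 : ∀ j, ∫ ω, ε ω j ∂P = 0 := by
    intro j; rw [integral_eval hε j, hεmean]; simp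
  -- the general risk identity
  have main : ∀ (Mm : Matrix (Fin n) (Fin n) ℝ) (y : Fin n → ℝ)
      (R : Matrix (Fin n) (Fin n) ℝ), R * (Aᵀ * A + Mm) = 1 →
      ∫ ω, ∑ i, (R.mulVec (Aᵀ.mulVec (A.mulVec (x ω) + ε ω) + Mm.mulVec y) - x ω) i ^ 2 ∂P
      = ((R*(Aᵀ*A) - 1) * Sx * (R*(Aᵀ*A) - 1)ᵀ).trace + ((R*Aᵀ) * Se * (R*Aᵀ)ᵀ).trace
        + ∑ i, (-((R*(Aᵀ*A) - 1).mulVec (y - μx))) i ^ 2 := by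
    intro Mm y R hR1
    have hRM : R * Mm = 1 - R * (Aᵀ * A) := by
      have h : R * (Aᵀ*A) + R * Mm = 1 := by rw [← Matrix.mul_add]; exact hR1
      exact eq_sub_of_add_eq' h
    have hptw : ∀ ω, (R.mulVec (Aᵀ.mulVec (A.mulVec (x ω) + ε ω) + Mm.mulVec y) - x ω)
        = (R*(Aᵀ*A) - 1).mulVec (x ω - μx) + (R*Aᵀ).mulVec (ε ω)
          + (-((R*(Aᵀ*A) - 1).mulVec (y - μx))) := by
      intro ω
      simp only [Matrix.mulVec_add, Matrix.mulVec_sub, Matrix.sub_mulVec, Matrix.neg_mulVec,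
        Matrix.mulVec_mulVec, Matrix.one_mulVec, hRM, Matrix.mul_assoc]
      abel
    have hrw : ∀ ω, ∑ i, (R.mulVec (Aᵀ.mulVec (A.mulVec (x ω) + ε ω) + Mm.mulVec y) - x ω) i ^ 2
        = ∑ i, ((R*(Aᵀ*A) - 1).mulVec (fun j => x ω j - μx j) i + (R*Aᵀ).mulVec (ε ω) i
          + (-((R*(Aᵀ*A) - 1).mulVec (y - μx))) i) ^ 2 := by
      intro ω
      refine Finset.sum_congr rfl fun i _ => ?_
      rw [congrFun (hptw ω) i]
      rfl
    have h1 : ∫ ω, ∑ i, (R.mulVec (Aᵀ.mulVec (A.mulVec (x ω) + ε ω) + Mm.mulVec y) - x ω) i ^ 2 ∂P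
        = ∫ ω, ∑ i, ((R*(Aᵀ*A) - 1).mulVec (fun j => x ω j - μx j) i + (R*Aᵀ).mulVec (ε ω) i
            + (-((R*(Aᵀ*A) - 1).mulVec (y - μx))) i) ^ 2 ∂P :=
      integral_congr_ae (Filter.Eventually.of_forall hrw)
    rw [h1]
    exact risk_formula (fun ω j => x ω j - μx j) ε hu hej hu0 he0 Sx hSx Se hSe huncorr
      (R*(Aᵀ*A) - 1) (R*Aᵀ) (-((R*(Aᵀ*A) - 1).mulVec (y - μx)))
  -- rewrite both sides
  have hNN : Aᵀ * A + (N⁻¹ - Aᵀ * A) = N⁻¹ := by abel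
  rw [hNN, Matrix.nonsing_inv_nonsing_inv N hdetN]
  rw [main (N⁻¹ - Aᵀ*A) x₀ N (by rw [hNN]; exact Matrix.mul_nonsing_inv N hdetN)]
  rw [main M x₀' ((Aᵀ*A + M)⁻¹) (Matrix.nonsing_inv_mul _ hdetM)]
  -- candidate constant term vanishes
  have hc0 : -((N*(Aᵀ*A) - 1).mulVec (x₀ - μx)) = 0 := by
    have h1 : N * (Aᵀ*A) - 1 = -(N * (N⁻¹ - Aᵀ*A)) := by
      rw [Matrix.mul_sub, Matrix.mul_nonsing_inv N hdetN]
      abel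
    rw [h1, Matrix.neg_mulVec, ← Matrix.mulVec_mulVec, hker, Matrix.mulVec_zero, neg_zero,
      neg_zero]
  rw [hc0]
  -- symmetry facts
  have hSxT : Sxᵀ = Sx := by
    ext i j
    rw [Matrix.transpose_apply, ← hSx j i, ← hSx i j]
    congr 1; funext ω; ring
  have hT : (Aᵀ*A)ᵀ = Aᵀ*A := by simp [Matrix.transpose_mul]
  have hRsym : ((Aᵀ*A + M)⁻¹)ᵀ = (Aᵀ*A + M)⁻¹ := by
    rw [Matrix.transpose_nonsing_inv]
    congr 1
    rw [Matrix.transpose_add, hT, hMsymm]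
  -- positive semidefiniteness
  have hSxpsd : ∀ v : Fin n → ℝ, 0 ≤ v ⬝ᵥ Sx.mulVec v := by
    intro v
    rw [← integral_bilin hu hu Sx hSx v v]
    exact integral_nonneg fun ω => mul_self_nonneg _
  have hSepsd : ∀ v : Fin m → ℝ, 0 ≤ v ⬝ᵥ Se.mulVec v := by
    intro v
    rw [← integral_bilin hej hej Se hSe v v]
    exact integral_nonneg fun ω => mul_self_nonneg _
  have key1 : ∀ {k l : ℕ} (C : Matrix (Fin l) (Fin l) ℝ) (A' : Matrix (Fin l) (Fin k) ℝ)
      (v : Fin k → ℝ), v ⬝ᵥ (A'ᵀ*C*A').mulVec v = (A'.mulVec v) ⬝ᵥ C.mulVec (A'.mulVec v) := by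
    intro k l C A' v
    rw [← Matrix.mulVec_mulVec, ← Matrix.mulVec_mulVec, Matrix.dotProduct_mulVec,
      Matrix.vecMul_transpose]
  have hBpsd : ∀ v : Fin n → ℝ, 0 ≤ v ⬝ᵥ (Aᵀ*(A*Sx*Aᵀ+Se)*A).mulVec v := by
    intro v
    rw [key1, Matrix.add_mulVec, dotProduct_add,
      show A*Sx*Aᵀ = Aᵀᵀ*Sx*Aᵀ by rw [Matrix.transpose_transpose], key1]
    exact add_nonneg (hSxpsd _) (hSepsd _)
  -- nonnegativity of the quadratic remainder
  set R := (Aᵀ*A + M)⁻¹ with hRdef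
  set B := Aᵀ*(A*Sx*Aᵀ+Se)*A with hBdef
  have hSsym : (R - N)ᵀ = R - N := by rw [Matrix.transpose_sub, hRsym, hNsymm]
  have htrpos : 0 ≤ ((R - N)*B*(R - N)).trace := by
    have hq : (R - N)*B*(R - N) = (R - N)*B*(R - N)ᵀ := by rw [hSsym]
    rw [hq]
    have : ((R - N)*B*(R - N)ᵀ).trace = ∑ i, ((R - N) i) ⬝ᵥ B.mulVec ((R - N) i) := by
      simp only [Matrix.trace, Matrix.diag]
      exact Finset.sum_congr rfl fun i _ => (diag_dot B (R - N) i).symm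
    rw [this]
    exact Finset.sum_nonneg fun i _ => hBpsd _
  -- trace identities
  have hFR := step1 A Sx Se hSxT R hRsym
  have hFN := step1 A Sx Se hSxT N hNsymm
  have htrR : (R*(Sx*(Aᵀ*A))).trace = (R*(Aᵀ*A*Sx)).trace := by
    have := swap_tr (Aᵀ*A) Sx R hT hSxT hRsym
    rw [this, Matrix.mul_assoc]
  have htrN : (N*(Sx*(Aᵀ*A))).trace = (N*(Aᵀ*A*Sx)).trace := by
    have := swap_tr (Aᵀ*A) Sx N hT hSxT hNsymm
    rw [this, Matrix.mul_assoc]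
  have h2 := step2 B (Aᵀ*A*Sx) (Sx*(Aᵀ*A)) R N htrR htrN hLyap
  -- assemble
  have hsum : 0 ≤ ∑ i, (-((R*(Aᵀ*A) - 1).mulVec (x₀' - μx))) i ^ 2 :=
    Finset.sum_nonneg fun i _ => sq_nonneg _
  have hBRR : (R*(Aᵀ*(A*Sx*Aᵀ+Se)*A)*R).trace = (R*B*R).trace := by rw [hBdef]
  have hBNN : (N*(Aᵀ*(A*Sx*Aᵀ+Se)*A)*N).trace = (N*B*N).trace := by rw [hBdef]
  have hGR : (R*(Aᵀ*A*Sx)).trace = (R*(Aᵀ*A*Sx)).trace := rfl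
  simp only [Pi.zero_apply, ne_eq, OfNat.ofNat_ne_zero, not_false_eq_true, zero_pow,
    Finset.sum_const_zero, add_zero]
  rw [hFR, hFN]
  rw [hBdef] at h2
  linarith
end

section
/- Let A ∈ ℝ^{m×n} with AᵀA invertible, let Σ_x ∈ ℝ^{n×n} and Σ_ε ∈ ℝ^{m×m} be symmetric positive definite, and assume AΣ_xAᵀ + Σ_ε and AᵀA + AᵀΣ_εA(AᵀA)⁻¹Σ_x⁻¹ are invertible. Then the following are equivalent: (1) the optimal Lavrentiev linear map W_Lav := (AᵀA + AᵀΣ_εA(AᵀA)⁻¹Σ_x⁻¹)⁻¹Aᵀ equals the LMMSE linear map W_LMMSE := Σ_xAᵀ(AΣ_xAᵀ + Σ_ε)⁻¹; (2) AᵀΣ_ε(I − A(AᵀA)⁻¹Aᵀ) = 0, i.e., AᵀΣ_ε annihilates the orthogonal projection onto ker(Aᵀ). -/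
open Matrix

/-- **When optimal Lavrentiev equals LMMSE.** With `AᵀA` invertible, `Sx`, `Se`
symmetric positive definite, and the indicated matrices invertible, the optimal
Lavrentiev linear map `(AᵀA + Aᵀ Se A (AᵀA)⁻¹ Sx⁻¹)⁻¹ Aᵀ` equals the LMMSE
linear map `Sx Aᵀ (A Sx Aᵀ + Se)⁻¹` if and only if
`Aᵀ Se (I − A(AᵀA)⁻¹Aᵀ) = 0`, i.e. `Aᵀ Se` annihilates the orthogonal
projection onto `ker(Aᵀ)`. -/
theorem lavrentiev_eq_lmmse_iff {m n : ℕ}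
    (A : Matrix (Fin m) (Fin n) ℝ) (hATA : IsUnit (Aᵀ * A))
    (Sx : Matrix (Fin n) (Fin n) ℝ) (hSx : Sx.PosDef)
    (Se : Matrix (Fin m) (Fin m) ℝ) (hSe : Se.PosDef)
    (hinv1 : IsUnit (A * Sx * Aᵀ + Se))
    (hinv2 : IsUnit (Aᵀ * A + Aᵀ * Se * A * (Aᵀ * A)⁻¹ * Sx⁻¹)) :
    (Aᵀ * A + Aᵀ * Se * A * (Aᵀ * A)⁻¹ * Sx⁻¹)⁻¹ * Aᵀ =
        Sx * Aᵀ * (A * Sx * Aᵀ + Se)⁻¹ ↔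
      Aᵀ * Se * (1 - A * (Aᵀ * A)⁻¹ * Aᵀ) = 0 := by
  set L := Aᵀ * A + Aᵀ * Se * A * (Aᵀ * A)⁻¹ * Sx⁻¹ with hLdef
  set G := A * Sx * Aᵀ + Se with hGdef
  have hSxd : IsUnit Sx.det := isUnit_iff_ne_zero.mpr (ne_of_gt hSx.det_pos)
  have hLd : IsUnit L.det := (Matrix.isUnit_iff_isUnit_det _).mp hinv2
  have hGd : IsUnit G.det := (Matrix.isUnit_iff_isUnit_det _).mp hinv1
  have e1 : Aᵀ * Se * A * (Aᵀ * A)⁻¹ * Sx⁻¹ * (Sx * Aᵀ)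
      = Aᵀ * Se * A * (Aᵀ * A)⁻¹ * Aᵀ := by
    rw [Matrix.mul_assoc _ Sx⁻¹, ← Matrix.mul_assoc Sx⁻¹,
      Matrix.nonsing_inv_mul _ hSxd, Matrix.one_mul]
  have key : Aᵀ * G - L * (Sx * Aᵀ) = Aᵀ * Se * (1 - A * (Aᵀ * A)⁻¹ * Aᵀ) := by
    rw [hGdef, hLdef, Matrix.mul_add, Matrix.add_mul, e1]
    simp only [Matrix.mul_sub, Matrix.mul_one, Matrix.mul_assoc]
    abel
  constructor
  · intro h
    have h2 : Aᵀ * G = L * (Sx * Aᵀ) := by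
      have := congrArg (fun X => L * X * G) h
      simpa [Matrix.mul_assoc, Matrix.mul_nonsing_inv_cancel_left _ _ hLd,
        Matrix.mul_nonsing_inv_cancel_right _ _ hGd,
        Matrix.nonsing_inv_mul_cancel_right _ _ hGd] using this
    rw [← key, h2, sub_self]
  · intro h
    have h2 : Aᵀ * G = L * (Sx * Aᵀ) := by
      have := sub_eq_zero.mp (key.trans h)
      exact this
    have := congrArg (fun X => L⁻¹ * X * G⁻¹) h2
    simpa [Matrix.mul_assoc, Matrix.nonsing_inv_mul_cancel_left _ _ hLd,
      Matrix.mul_nonsing_inv_cancel_right _ _ hGd] using this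
end
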